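/- Let k be a finite field, G = GL_n(k), B the Borel subgroup of upper triangular invertible matrices, U the upper unitriangular subgroup, L the diagonal subgroup, V the lower unitriangular subgroup, and W the group of permutation matrices with length function ℓ (word length in the standard Coxeter generators). If t, r ∈ W satisfy ℓ(t) ≤ ℓ(r) and t ≠ r, then ULV ∩ t⁻¹Ur = ∅. -/

import Mathlib

open Matrix MonoidAlgebra

namespace PS

variable {n : ℕ} {R : Type*} [CommRing R]

/-- `g` is upper unitriangular. -/
def IsU (g : GL (Fin n) R) : Prop :=
  (∀ i : Fin n, (g : Matrix (Fin n) (Fin n) R) i i = 1) ∧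
    ∀ i j : Fin n, j < i → (g : Matrix (Fin n) (Fin n) R) i j = 0

/-- `g` is lower unitriangular. -/
def IsV (g : GL (Fin n) R) : Prop :=
  (∀ i : Fin n, (g : Matrix (Fin n) (Fin n) R) i i = 1) ∧
    ∀ i j : Fin n, i < j → (g : Matrix (Fin n) (Fin n) R) i j = 0

/-- `g` is diagonal. -/
def IsL (g : GL (Fin n) R) : Prop :=
  ∀ i j : Fin n, i ≠ j → (g : Matrix (Fin n) (Fin n) R) i j = 0

/-- `g` is a permutation matrix. -/
def IsW (g : GL (Fin n) R) : Prop :=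
  ∃ σ : Equiv.Perm (Fin n), (g : Matrix (Fin n) (Fin n) R) = σ.permMatrix R

def Uset (n : ℕ) (R : Type*) [CommRing R] : Set (GL (Fin n) R) := {g | IsU g}
def Vset (n : ℕ) (R : Type*) [CommRing R] : Set (GL (Fin n) R) := {g | IsV g}
def Lset (n : ℕ) (R : Type*) [CommRing R] : Set (GL (Fin n) R) := {g | IsL g}
def Wset (n : ℕ) (R : Type*) [CommRing R] : Set (GL (Fin n) R) := {g | IsW g}

/-- the diagonal element of `GL n R` with unit entries `d`. -/
def diagGL (d : Fin n → Rˣ) : GL (Fin n) R :=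
  ⟨Matrix.diagonal fun i => (d i : R), Matrix.diagonal fun i => ((d i)⁻¹ : Rˣ),
   by rw [Matrix.diagonal_mul_diagonal]; convert Matrix.diagonal_one using 2; simp,
   by rw [Matrix.diagonal_mul_diagonal]; convert Matrix.diagonal_one using 2; simp⟩

/-- the permutation matrix of `σ`, as an element of `GL n R`. -/
def permGL (σ : Equiv.Perm (Fin n)) : GL (Fin n) R :=
  ⟨σ.permMatrix R, (σ⁻¹).permMatrix R,
   by
    simp only [Equiv.Perm.permMatrix, ← PEquiv.toMatrix_trans, ← Equiv.toPEquiv_trans]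
    simp [Equiv.Perm.inv_def, Equiv.self_trans_symm, Equiv.symm_trans_self, Equiv.toPEquiv_refl, PEquiv.toMatrix_refl],
   by
    simp only [Equiv.Perm.permMatrix, ← PEquiv.toMatrix_trans, ← Equiv.toPEquiv_trans]
    simp [Equiv.Perm.inv_def, Equiv.self_trans_symm, Equiv.symm_trans_self, Equiv.toPEquiv_refl, PEquiv.toMatrix_refl]⟩

/-- `H^w = w⁻¹ H w`, as a subset of the group. -/
def conjSet {G : Type*} [Group G] (S : Set G) (w : G) : Set G := {g | w * g * w⁻¹ ∈ S}

/-- the set of adjacent transpositions (standard Coxeter generators) in `S_n`. -/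
def adjT (n : ℕ) : Set (Equiv.Perm (Fin n)) :=
  {σ | ∃ i j : Fin n, (i : ℕ) + 1 = (j : ℕ) ∧ σ = Equiv.swap i j}

/-- the Coxeter word length of a permutation, with respect to adjacent transpositions. -/
noncomputable def permLength {n : ℕ} (σ : Equiv.Perm (Fin n)) : ℕ :=
  sInf {k | ∃ l : List (Equiv.Perm (Fin n)),
    l.length = k ∧ (∀ τ ∈ l, τ ∈ adjT n) ∧ l.prod = σ}

open scoped Classical in
/-- the averaging element `e_S = |S|⁻¹ ∑_{h ∈ S} h` in the complex group algebra. -/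
noncomputable def eAvg {G : Type*} [Group G] [Fintype G] (S : Set G) : MonoidAlgebra ℂ G :=
  (S.toFinset.card : ℂ)⁻¹ • ∑ h ∈ S.toFinset, MonoidAlgebra.of ℂ G h

/-- the reduction-mod-`m` homomorphism `GL_n(R) → GL_n(R/m)` for a local ring `R`. -/
noncomputable def red (n : ℕ) (R : Type*) [CommRing R] [IsLocalRing R] :
    GL (Fin n) R →* GL (Fin n) (IsLocalRing.ResidueField R) :=
  Matrix.GeneralLinearGroup.map (IsLocalRing.residue R)

/-- the congruence kernel `G_0 = ker (GL_n(R) → GL_n(R/m))`. -/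
noncomputable def G0 (n : ℕ) (R : Type*) [CommRing R] [IsLocalRing R] : Set (GL (Fin n) R) :=
  {g | red n R g = 1}

variable [Fintype R] [DecidableEq R]

/-- the primitive idempotent `e_χ = |L|⁻¹ ∑_{l ∈ L} χ(l)⁻¹ l` of `C[L] ⊆ C[G]` attached to the
character `χ` of `L ≅ (Rˣ)^n`. -/
noncomputable def eChi (χ : (Fin n → Rˣ) →* ℂˣ) : MonoidAlgebra ℂ (GL (Fin n) R) :=
  (Fintype.card (Fin n → Rˣ) : ℂ)⁻¹ •
    ∑ d : Fin n → Rˣ, (((χ d)⁻¹ : ℂˣ) : ℂ) • MonoidAlgebra.of ℂ (GL (Fin n) R) (diagGL d)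

/-- the representation `i(χ) ≅ C[G] e_U e_V e_χ`, as a `ℂ`-subspace of `C[G]`
(with `G` acting by left multiplication). -/
noncomputable def Vrep (n : ℕ) (R : Type*) [CommRing R] [Fintype R] [DecidableEq R]
    (χ : (Fin n → Rˣ) →* ℂˣ) : Submodule ℂ (MonoidAlgebra ℂ (GL (Fin n) R)) :=
  LinearMap.range (LinearMap.mulRight ℂ (eAvg (Uset n R) * eAvg (Vset n R) * eChi χ))

/-- the space `Hom_G(i(χ), i(σ))` of `G`-equivariant linear maps. -/
noncomputable def HomG (n : ℕ) (R : Type*) [CommRing R] [Fintype R] [DecidableEq R]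
    (χ σ : (Fin n → Rˣ) →* ℂˣ) :
    Submodule ℂ (↥(Vrep n R χ) →ₗ[ℂ] ↥(Vrep n R σ)) where
  carrier := {f | ∀ (g : GL (Fin n) R) (x y : Vrep n R χ),
    (x : MonoidAlgebra ℂ (GL (Fin n) R)) = MonoidAlgebra.of ℂ (GL (Fin n) R) g * (y : MonoidAlgebra ℂ (GL (Fin n) R)) →
    ((f x : Vrep n R σ) : MonoidAlgebra ℂ (GL (Fin n) R)) = MonoidAlgebra.of ℂ (GL (Fin n) R) g * ((f y : Vrep n R σ) : MonoidAlgebra ℂ (GL (Fin n) R))}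
  add_mem' := by
    intro f g hf hg k x y h
    simp only [LinearMap.add_apply, Submodule.coe_add, hf k x y h, hg k x y h, mul_add]
  zero_mem' := by intro k x y h; simp
  smul_mem' := by
    intro c f hf k x y h
    simp only [LinearMap.smul_apply, Submodule.coe_smul, hf k x y h, Algebra.mul_smul_comm]

end PS

namespace PSAux
open Finset PS
variable {n : ℕ}

def InvSet (σ : Equiv.Perm (Fin n)) : Finset (Fin n × Fin n) :=
  univ.filter fun p => p.1 < p.2 ∧ σ p.2 < σ p.1

noncomputable def invN (σ : Equiv.Perm (Fin n)) : ℕ := (InvSet σ).card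

lemma mem_InvSet {σ : Equiv.Perm (Fin n)} {p : Fin n × Fin n} :
    p ∈ InvSet σ ↔ p.1 < p.2 ∧ σ p.2 < σ p.1 := by simp [InvSet]

lemma swap_adj_lt_iff {i j x y : Fin n} (hij : (i : ℕ) + 1 = j)
    (h1 : ¬(x = i ∧ y = j)) (h2 : ¬(x = j ∧ y = i)) :
    Equiv.swap i j x < Equiv.swap i j y ↔ x < y := by
  simp only [Fin.ext_iff, not_and] at h1 h2
  simp only [Equiv.swap_apply_def, Fin.lt_def]
  split_ifs <;> simp only [Fin.ext_iff] at * <;> omega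

/-- left multiplication by an adjacent swap adds at most one inversion. -/
lemma invN_swap_mul_le {i j : Fin n} (ρ : Equiv.Perm (Fin n)) (hij : (i : ℕ) + 1 = j) :
    invN (Equiv.swap i j * ρ) ≤ invN ρ + 1 := by
  classical
  set q : Fin n × Fin n :=
    if ρ⁻¹ i < ρ⁻¹ j then (ρ⁻¹ i, ρ⁻¹ j) else (ρ⁻¹ j, ρ⁻¹ i) with hq
  have hsub : InvSet (Equiv.swap i j * ρ) ⊆ insert q (InvSet ρ) := by
    intro p hp
    rw [mem_InvSet] at hp
    obtain ⟨hlt, hinv⟩ := hp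
    simp only [Equiv.Perm.mul_apply] at hinv
    by_cases hc : (ρ p.2 = i ∧ ρ p.1 = j) ∨ (ρ p.2 = j ∧ ρ p.1 = i)
    · have hp1 : p.1 = ρ⁻¹ i ∨ p.1 = ρ⁻¹ j := by
        rcases hc with ⟨h, h'⟩ | ⟨h, h'⟩
        · right; rw [← h']; simp
        · left; rw [← h']; simp
      have hp2 : p.2 = ρ⁻¹ i ∨ p.2 = ρ⁻¹ j := by
        rcases hc with ⟨h, h'⟩ | ⟨h, h'⟩
        · left; rw [← h]; simp
        · right; rw [← h]; simp
      have hne : p.1 ≠ p.2 := ne_of_lt hlt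
      apply mem_insert.2; left
      rw [hq]
      rcases hp1 with h1 | h1 <;> rcases hp2 with h2 | h2
      · exact absurd (h1.trans h2.symm) hne
      · rw [if_pos]; · exact Prod.ext h1 h2
        rw [← h1, ← h2]; exact hlt
      · rw [if_neg]; · exact Prod.ext h1 h2
        rw [← h1, ← h2]; exact not_lt.2 hlt.le
      · exact absurd (h1.trans h2.symm) hne
    · push_neg at hc
      have := (swap_adj_lt_iff (x := ρ p.2) (y := ρ p.1) hij
        (by tauto) (by tauto)).1 hinv
      exact mem_insert.2 (Or.inr (mem_InvSet.2 ⟨hlt, this⟩))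
  calc invN (Equiv.swap i j * ρ) ≤ (insert q (InvSet ρ)).card := card_le_card hsub
    _ ≤ invN ρ + 1 := card_insert_le _ _

/-- right multiplication by an adjacent swap at a descent removes an inversion. -/
lemma invN_mul_swap_lt {i j : Fin n} (σ : Equiv.Perm (Fin n)) (hij : (i : ℕ) + 1 = j)
    (hd : σ j < σ i) : invN (σ * Equiv.swap i j) < invN σ := by
  classical
  have hijlt : i < j := by rw [Fin.lt_def]; omega
  have hijne : i ≠ j := ne_of_lt hijlt
  have hmem : (i, j) ∈ InvSet σ := mem_InvSet.2 ⟨hijlt, hd⟩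
  have hcard : invN (σ * Equiv.swap i j) ≤ ((InvSet σ).erase (i, j)).card := by
    apply card_le_card_of_injOn (fun p => (Equiv.swap i j p.1, Equiv.swap i j p.2))
    · intro p hp
      rw [mem_coe] at hp ⊢; rw [mem_InvSet] at hp
      obtain ⟨hlt, hinv⟩ := hp
      simp only [Equiv.Perm.mul_apply] at hinv
      have hpne : ¬(p.1 = i ∧ p.2 = j) := by
        rintro ⟨h1, h2⟩
        rw [h1, h2] at hinv
        rw [Equiv.swap_apply_left, Equiv.swap_apply_right] at hinv
        exact absurd hd (not_lt.2 hinv.le)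
      have hpne' : ¬(p.1 = j ∧ p.2 = i) := by
        rintro ⟨h1, h2⟩
        rw [h1, h2] at hlt
        exact absurd hijlt (not_lt.2 hlt.le)
      have hso : Equiv.swap i j p.1 < Equiv.swap i j p.2 :=
        (swap_adj_lt_iff hij hpne hpne').2 hlt
      apply mem_erase.2
      constructor
      · intro hEq
        have h1 : p.1 = j := by
          have := congrArg Prod.fst hEq
          simp only at this
          have := congrArg (Equiv.swap i j) this
          simpa [Equiv.swap_apply_self, Equiv.swap_apply_left] using this
        have h2 : p.2 = i := by
          have := congrArg Prod.snd hEq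
          simp only at this
          have := congrArg (Equiv.swap i j) this
          simpa [Equiv.swap_apply_self, Equiv.swap_apply_right] using this
        exact hpne' ⟨h1, h2⟩
      · exact mem_InvSet.2 ⟨hso, hinv⟩
    · intro p _ p' _ hEq
      have h1 := congrArg Prod.fst hEq
      have h2 := congrArg Prod.snd hEq
      simp only at h1 h2
      have h1 := congrArg (Equiv.swap i j) h1
      have h2 := congrArg (Equiv.swap i j) h2
      simp only [Equiv.swap_apply_self] at h1 h2
      exact Prod.ext h1 h2
  have : ((InvSet σ).erase (i, j)).card < invN σ := card_erase_lt_of_mem hmem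
  omega

/-- a permutation of `Fin n` that increases on adjacent indices is strictly monotone. -/
lemma strictMono_of_adj (σ : Equiv.Perm (Fin n))
    (h : ∀ i j : Fin n, (i : ℕ) + 1 = (j : ℕ) → σ i < σ j) : StrictMono σ := by
  have key : ∀ d : ℕ, ∀ a c : Fin n, (a : ℕ) + d + 1 = (c : ℕ) → σ a < σ c := by
    intro d
    induction d with
    | zero => intro a c hac; exact h a c (by omega)
    | succ d ih =>
      intro a c hac
      have hc' : (a : ℕ) + d + 1 < n := by have := c.2; omega
      set c' : Fin n := ⟨(a : ℕ) + d + 1, hc'⟩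
      exact lt_trans (ih a c' rfl) (h c' c (by simp [c']; omega))
  intro a c hac
  rw [Fin.lt_def] at hac
  exact key ((c : ℕ) - (a : ℕ) - 1) a c (by omega)

/-- a strictly monotone permutation of `Fin n` is the identity. -/
lemma eq_one_of_strictMono (σ : Equiv.Perm (Fin n)) (h : StrictMono σ) : σ = 1 := by
  have key : ∀ k : ℕ, ∀ a : Fin n, (a : ℕ) = k → σ a = a := by
    intro k
    induction k using Nat.strong_induction_on with
    | _ k ih =>
      intro a hak
      have IH : ∀ c : Fin n, c < a → σ c = c := fun c hc =>
        ih (c : ℕ) (by rw [← hak]; exact hc) c rfl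
      have h1 : ¬ σ a < a := by
        intro hlt
        have := IH (σ a) hlt
        exact absurd (σ.injective this) (ne_of_lt hlt)
      have h2 : ¬ σ⁻¹ a < a := by
        intro hlt
        have h3 := IH (σ⁻¹ a) hlt
        rw [← Equiv.Perm.mul_apply, mul_inv_cancel, Equiv.Perm.one_apply] at h3
        exact absurd h3.symm (ne_of_lt hlt)
      have h4 : σ a ≤ σ (σ⁻¹ a) := h.monotone (not_lt.1 h2)
      rw [← Equiv.Perm.mul_apply, mul_inv_cancel, Equiv.Perm.one_apply] at h4
      exact le_antisymm h4 (not_lt.1 h1)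
  apply Equiv.ext
  intro a
  exact key (a : ℕ) a rfl

/-- an inverted permutation has an adjacent descent. -/
lemma exists_descent (σ : Equiv.Perm (Fin n)) (hσ : invN σ ≠ 0) :
    ∃ i j : Fin n, (i : ℕ) + 1 = (j : ℕ) ∧ σ j < σ i := by
  by_contra hcon
  push_neg at hcon
  have hmono : StrictMono σ := by
    apply strictMono_of_adj
    intro i j hij
    have h1 := hcon i j hij
    have hne : σ i ≠ σ j := fun hEq =>
      absurd (σ.injective hEq) (by simp [Fin.ext_iff]; omega)
    exact lt_of_le_of_ne h1 hne
  obtain ⟨p, hp⟩ := card_ne_zero.1 hσ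
  rw [mem_InvSet] at hp
  exact absurd (hmono hp.1) (not_lt.2 hp.2.le)

/-- a word of adjacent swaps of length `< invN σ` cannot exist. -/
lemma invN_le_length (L : List (Equiv.Perm (Fin n))) (hL : ∀ τ ∈ L, τ ∈ adjT n) :
    invN L.prod ≤ L.length := by
  induction L with
  | nil =>
    simp only [List.prod_nil, List.length_nil, Nat.le_zero, invN, card_eq_zero]
    apply filter_false_of_mem
    rintro ⟨a, c⟩ -
    rintro ⟨h1, h2⟩
    simp only [Equiv.Perm.one_apply] at h2
    exact absurd h1 (not_lt.2 h2.le)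
  | cons τ L ih =>
    obtain ⟨i, j, hij, rfl⟩ := hL τ List.mem_cons_self
    have hj : (⟨(i:ℕ)+1, by omega⟩  : Fin n) = j := by
      apply Fin.ext; simpa using hij
    rw [List.prod_cons]
    calc invN (Equiv.swap i j * L.prod) ≤ invN L.prod + 1 :=
          invN_swap_mul_le L.prod hij
      _ ≤ L.length + 1 := by
          have := ih (fun τ hτ => hL τ (List.mem_cons_of_mem _ hτ))
          omega
      _ = (Equiv.swap i j :: L).length := by simp

/-- existence of a word of length at most `invN σ`. -/
lemma exists_word (σ : Equiv.Perm (Fin n)) :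
    ∃ L : List (Equiv.Perm (Fin n)),
      (∀ τ ∈ L, τ ∈ adjT n) ∧ L.prod = σ ∧ L.length ≤ invN σ := by
  generalize hN : invN σ = N
  induction N using Nat.strong_induction_on generalizing σ with
  | _ N ih =>
    by_cases h0 : invN σ = 0
    · have hmono : StrictMono σ := by
        apply strictMono_of_adj
        intro i j hij
        by_contra hc
        have hd : σ j < σ i := by
          rcases lt_or_eq_of_le (not_lt.1 hc) with h | h
          · exact h
          · have h2 := σ.injective h
            rw [Fin.ext_iff] at h2
            omega
        have hmem : (i, j) ∈ InvSet σ := mem_InvSet.2 ⟨show i < j by rw [Fin.lt_def]; omega, hd⟩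
        have hne : InvSet σ ≠ ∅ := ne_empty_of_mem hmem
        simp only [invN, card_eq_zero] at h0
        exact hne h0
      have h1 : σ = 1 := eq_one_of_strictMono σ hmono
      exact ⟨[], by simp, by simp [h1], by simp⟩
    · obtain ⟨i, j, hij, hd⟩ := exists_descent σ h0
      set σ' := σ * Equiv.swap i j with hσ'
      have hlt : invN σ' < invN σ := invN_mul_swap_lt σ hij hd
      obtain ⟨L, hL1, hL2, hL3⟩ := ih (invN σ') (by omega) σ' rfl
      refine ⟨L ++ [Equiv.swap i j], ?_, ?_, ?_⟩
      · intro τ hτ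
        rcases List.mem_append.1 hτ with h | h
        · exact hL1 τ h
        · rw [List.mem_singleton.1 h]; exact ⟨i, j, hij, rfl⟩
      · rw [List.prod_append, hL2, List.prod_singleton, hσ', mul_assoc,
          Equiv.swap_mul_self, mul_one]
      · simp only [List.length_append, List.length_singleton]; omega

/-- permLength equals the inversion number. -/
lemma permLength_eq_invN (σ : Equiv.Perm (Fin n)) : permLength σ = invN σ := by
  obtain ⟨L, hL1, hL2, hL3⟩ := exists_word σ
  have hmem : L.length ∈ {k | ∃ l : List (Equiv.Perm (Fin n)),
      l.length = k ∧ (∀ τ ∈ l, τ ∈ adjT n) ∧ l.prod = σ} := ⟨L, rfl, hL1, hL2⟩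
  have hle : permLength σ ≤ invN σ := le_trans (Nat.sInf_le hmem) hL3
  have hne : {k | ∃ l : List (Equiv.Perm (Fin n)),
      l.length = k ∧ (∀ τ ∈ l, τ ∈ adjT n) ∧ l.prod = σ}.Nonempty := ⟨L.length, hmem⟩
  obtain ⟨M, hM1, hM2, hM3⟩ := Nat.sInf_mem hne
  have h6 := invN_le_length M hM2
  rw [hM3] at h6
  have hM1' : M.length = permLength σ := hM1
  omega

/-- right multiplication by a transposition at an inversion decreases the inversion number. -/
lemma invN_mul_swap_lt' {i b : Fin n} (σ : Equiv.Perm (Fin n)) (hib : i < b) (hd : σ b < σ i) :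
    invN (σ * Equiv.swap i b) < invN σ := by
  classical
  have hine : i ≠ b := ne_of_lt hib
  have hsi : Equiv.swap i b i = b := Equiv.swap_apply_left i b
  have hsb : Equiv.swap i b b = i := Equiv.swap_apply_right i b
  have hso : ∀ x : Fin n, x ≠ i → x ≠ b → Equiv.swap i b x = x := fun x h1 h2 =>
    Equiv.swap_apply_of_ne_of_ne h1 h2
  set φ : Fin n × Fin n → Fin n × Fin n := fun p =>
    if p.2 = i then (p.1, b)
    else if p.2 = b then (if p.1 < i then (p.1, i) else p)
    else if p.1 = b ∧ σ b ≤ σ p.2 then (i, p.2)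
    else p with hφ
  set ψ : Fin n × Fin n → Fin n × Fin n := fun q =>
    if q.2 = i then (q.1, b)
    else if q.2 = b then (if q.1 < i then (q.1, i) else q)
    else if q.1 = i ∧ σ b ≤ σ q.2 then (b, q.2)
    else q with hψ
  have hmem : (i, b) ∈ InvSet σ := mem_InvSet.2 ⟨hib, hd⟩
  have key : ∀ p ∈ InvSet (σ * Equiv.swap i b),
      (φ p ∈ (InvSet σ).erase (i, b)) ∧ ψ (φ p) = p := by
    rintro ⟨a, c⟩ hp
    rw [mem_InvSet] at hp
    obtain ⟨hac, hinv⟩ := hp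
    simp only [Equiv.Perm.mul_apply] at hinv
    by_cases hci : c = i
    · -- case 1 : c = i, so a < i
      have hai : a < i := hci ▸ hac
      have hane : a ≠ i := ne_of_lt hai
      have hanb : a ≠ b := ne_of_lt (lt_trans hai hib)
      rw [hci, hsi, hso a hane hanb] at hinv
      have h1 : φ (a, c) = (a, b) := by simp [hφ, hci]
      have h2 : ψ (a, b) = (a, i) := by simp [hψ, hine.symm, hai]
      refine ⟨?_, ?_⟩
      · rw [h1, mem_erase]
        exact ⟨by simp [Prod.ext_iff, hane], mem_InvSet.2 ⟨lt_trans hai hib, hinv⟩⟩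
      · rw [h1, h2, hci]
    · by_cases hcb : c = b
      · by_cases hai : a < i
        · -- case 2 : c = b, a < i
          have hane : a ≠ i := ne_of_lt hai
          have hanb : a ≠ b := ne_of_lt (lt_trans hai hib)
          rw [hcb, hsb, hso a hane hanb] at hinv
          have h1 : φ (a, c) = (a, i) := by simp [hφ, hcb, hine.symm, hai]
          have h2 : ψ (a, i) = (a, b) := by simp [hψ]
          refine ⟨?_, ?_⟩
          · rw [h1, mem_erase]
            exact ⟨by simp [Prod.ext_iff, hine], mem_InvSet.2 ⟨hai, hinv⟩⟩
          · rw [h1, h2, hcb]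
        · -- case 3 : c = b, i < a < b
          have hane : a ≠ i := by
            intro hEq
            rw [hcb, hsb, hEq, hsi] at hinv
            exact absurd hinv (not_lt.2 hd.le)
          have hanb : a ≠ b := ne_of_lt (hcb ▸ hac)
          rw [hcb, hsb, hso a hane hanb] at hinv
          have h1 : φ (a, c) = (a, c) := by simp [hφ, hcb, hine.symm, hai]
          have h2 : ψ (a, c) = (a, c) := by simp [hψ, hcb, hine.symm, hai]
          refine ⟨?_, ?_⟩
          · rw [h1, mem_erase]
            refine ⟨by simp [Prod.ext_iff, hane], mem_InvSet.2 ⟨hac, ?_⟩⟩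
            rw [hcb]
            exact lt_trans hd hinv
          · rw [h1, h2]
      · -- c ∉ {i, b}
        rw [hso c hci hcb] at hinv
        by_cases hab : a = b
        · by_cases hbc : σ b ≤ σ c
          · -- case 4a : a = b, σ b ≤ σ c
            rw [hab, hsb] at hinv
            have h1 : φ (a, c) = (i, c) := by simp [hφ, hci, hcb, hab, hbc]
            have h2 : ψ (i, c) = (b, c) := by simp [hψ, hci, hcb, hbc]
            refine ⟨?_, ?_⟩
            · rw [h1, mem_erase]
              exact ⟨by simp [Prod.ext_iff, hcb], mem_InvSet.2 ⟨lt_trans hib (hab ▸ hac), hinv⟩⟩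
            · rw [h1, h2, hab]
          · -- case 4b-i : a = b, σ c < σ b
            rw [hab, hsb] at hinv
            have h1 : φ (a, c) = (a, c) := by simp [hφ, hci, hcb, hbc]
            have h2 : ψ (a, c) = (a, c) := by simp [hψ, hci, hcb, hbc, hab, hine]
            refine ⟨?_, ?_⟩
            · rw [h1, mem_erase]
              refine ⟨by simp [Prod.ext_iff, hcb], mem_InvSet.2 ⟨hac, ?_⟩⟩
              rw [hab]
              exact not_le.1 hbc
            · rw [h1, h2]
        · by_cases hain : a = i
          · -- case 4b-ii : a = i
            rw [hain, hsi] at hinv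
            have h1 : φ (a, c) = (a, c) := by simp [hφ, hci, hcb, hain, hine]
            have h2 : ψ (a, c) = (a, c) := by simp [hψ, hci, hcb, not_le.2 hinv]
            refine ⟨?_, ?_⟩
            · rw [h1, mem_erase]
              refine ⟨by simp [Prod.ext_iff, hcb], mem_InvSet.2 ⟨hac, ?_⟩⟩
              rw [hain]
              exact lt_trans hinv hd
            · rw [h1, h2]
          · -- case 4b-iii : a ∉ {i, b}
            rw [hso a hain hab] at hinv
            have h1 : φ (a, c) = (a, c) := by simp [hφ, hci, hcb, hab]
            have h2 : ψ (a, c) = (a, c) := by simp [hψ, hci, hcb, hain]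
            refine ⟨?_, ?_⟩
            · rw [h1, mem_erase]
              exact ⟨by simp [Prod.ext_iff, hcb], mem_InvSet.2 ⟨hac, hinv⟩⟩
            · rw [h1, h2]
  have hcard : invN (σ * Equiv.swap i b) ≤ ((InvSet σ).erase (i, b)).card := by
    apply card_le_card_of_injOn φ
    · intro p hp; exact (key p hp).1
    · intro p hp q hq hEq
      rw [← (key p hp).2, ← (key q hq).2, hEq]
  have : ((InvSet σ).erase (i, b)).card < invN σ := card_erase_lt_of_mem hmem
  omega

/-- prefix count: positions `< m` with value `≥ j`. -/
def Pc (w : Equiv.Perm (Fin n)) (m j : ℕ) : ℕ :=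
  (univ.filter fun a : Fin n => (a : ℕ) < m ∧ j ≤ ((w a : Fin n) : ℕ)).card

/-- middle count: positions strictly between `i` and `m`, value `≥ j`. -/
def Qc (w : Equiv.Perm (Fin n)) (i : Fin n) (m j : ℕ) : ℕ :=
  (univ.filter fun a : Fin n => (i : ℕ) < (a : ℕ) ∧ (a : ℕ) < m ∧ j ≤ ((w a : Fin n) : ℕ)).card

/-- initial count: positions `< i`, value `≥ j`. -/
def Ec (w : Equiv.Perm (Fin n)) (i : Fin n) (j : ℕ) : ℕ :=
  (univ.filter fun a : Fin n => (a : ℕ) < (i : ℕ) ∧ j ≤ ((w a : Fin n) : ℕ)).card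

lemma Pc_split (w : Equiv.Perm (Fin n)) (i : Fin n) {m j : ℕ} (hm : (i : ℕ) < m) :
    Pc w m j = Ec w i j + (if j ≤ ((w i : Fin n) : ℕ) then 1 else 0) + Qc w i m j := by
  classical
  have hmid : (univ.filter fun a : Fin n => (a : ℕ) = (i : ℕ) ∧ j ≤ ((w a : Fin n) : ℕ)).card
      = if j ≤ ((w i : Fin n) : ℕ) then 1 else 0 := by
    split_ifs with hj
    · rw [← card_singleton i]
      congr 1
      ext a
      simp only [mem_filter, mem_univ, true_and, mem_singleton]
      constructor
      · rintro ⟨h1, _⟩; exact Fin.ext h1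
      · rintro rfl; exact ⟨rfl, hj⟩
    · rw [card_eq_zero]
      rw [filter_eq_empty_iff]
      rintro a - ⟨h1, h2⟩
      rw [Fin.ext h1] at h2
      exact hj h2
  rw [Pc, Ec, Qc, card_filter, card_filter, card_filter, ← hmid, card_filter,
    ← sum_add_distrib, ← sum_add_distrib]
  apply sum_congr rfl
  intro a _
  split_ifs <;> omega

lemma dom_invN (r : Equiv.Perm (Fin n)) :
    ∀ N : ℕ, ∀ t : Equiv.Perm (Fin n), invN t = N →
      (∀ m j : ℕ, Pc r m j ≤ Pc t m j) →
      invN r ≤ invN t ∧ (t ≠ r → invN r < invN t) := by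
  classical
  intro N
  induction N using Nat.strong_induction_on with
  | _ N ih =>
  intro t hN h
  by_cases hEq : t = r
  · subst hEq; exact ⟨le_refl _, fun h' => absurd rfl h'⟩
  -- minimal index where t and r differ
  have hDif : (univ.filter fun a : Fin n => t a ≠ r a).Nonempty := by
    by_contra hcon
    rw [not_nonempty_iff_eq_empty, filter_eq_empty_iff] at hcon
    exact hEq (Equiv.ext fun a => not_not.1 fun hne => hcon (mem_univ a) hne)
  set i := (univ.filter fun a : Fin n => t a ≠ r a).min' hDif with hidef
  have hiDif : t i ≠ r i := (mem_filter.1 (min'_mem _ hDif)).2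
  have hpre : ∀ a : Fin n, a < i → t a = r a := by
    intro a ha
    by_contra hne
    exact absurd ha (not_lt.2 (min'_le _ a (mem_filter.2 ⟨mem_univ a, hne⟩)))
  have hEc : ∀ j : ℕ, Ec t i j = Ec r i j := by
    intro j
    have hset : (univ.filter fun a : Fin n => (a : ℕ) < (i : ℕ) ∧ j ≤ ((t a : Fin n) : ℕ))
        = (univ.filter fun a : Fin n => (a : ℕ) < (i : ℕ) ∧ j ≤ ((r a : Fin n) : ℕ)) := by
      ext a
      simp only [mem_filter, mem_univ, true_and]
      constructor <;> rintro ⟨h1, h2⟩ <;> refine ⟨h1, ?_⟩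
      · rw [← hpre a (Fin.lt_def.2 h1)]; exact h2
      · rw [hpre a (Fin.lt_def.2 h1)]; exact h2
    unfold Ec
    rw [hset]
  have hQzero : ∀ (w : Equiv.Perm (Fin n)) (j : ℕ), Qc w i ((i : ℕ) + 1) j = 0 := by
    intro w j
    rw [Qc, card_eq_zero, filter_eq_empty_iff]
    rintro a - ⟨h1, h2, -⟩
    omega
  -- r i < t i
  have hri : ((r i : Fin n) : ℕ) < ((t i : Fin n) : ℕ) := by
    have hdom := h ((i : ℕ) + 1) ((r i : Fin n) : ℕ)
    rw [Pc_split t i (by omega), Pc_split r i (by omega), hQzero, hQzero, hEc] at hdom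
    have hne : ((t i : Fin n) : ℕ) ≠ ((r i : Fin n) : ℕ) := fun hv => hiDif (Fin.ext hv)
    split_ifs at hdom <;> omega
  -- the pivot b
  have hBne : (univ.filter fun a : Fin n => i < a ∧ r i ≤ t a ∧ t a < t i).Nonempty := by
    refine ⟨t.symm (r i), mem_filter.2 ⟨mem_univ _, ?_, ?_, ?_⟩⟩
    · rcases lt_trichotomy (t.symm (r i)) i with hlt | hEq2 | hgt
      · exfalso
        have h1 := hpre _ hlt
        rw [Equiv.apply_symm_apply] at h1
        have h2 := r.injective h1.symm
        exact absurd h2 (ne_of_lt hlt)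
      · exfalso
        apply hiDif
        rw [← hEq2, Equiv.apply_symm_apply, hEq2]
      · exact hgt
    · rw [Equiv.apply_symm_apply]
    · rw [Equiv.apply_symm_apply]
      exact Fin.lt_def.2 hri
  set b := (univ.filter fun a : Fin n => i < a ∧ r i ≤ t a ∧ t a < t i).min' hBne with hbdef
  have hbmem : i < b ∧ r i ≤ t b ∧ t b < t i := (mem_filter.1 (min'_mem _ hBne)).2
  obtain ⟨hib, hrib, htbi⟩ := hbmem
  have hvtb := Fin.lt_def.1 htbi
  have hbmin : ∀ a : Fin n, i < a → r i ≤ t a → t a < t i → b ≤ a := fun a h1 h2 h3 =>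
    min'_le _ a (mem_filter.2 ⟨mem_univ a, h1, h2, h3⟩)
  -- the new permutation
  set t' := t * Equiv.swap i b with ht'def
  have hine : i ≠ b := ne_of_lt hib
  have ht'i : t' i = t b := by
    rw [ht'def, Equiv.Perm.mul_apply, Equiv.swap_apply_left]
  have ht'b : t' b = t i := by
    rw [ht'def, Equiv.Perm.mul_apply, Equiv.swap_apply_right]
  have ht'o : ∀ a : Fin n, a ≠ i → a ≠ b → t' a = t a := by
    intro a h1 h2
    rw [ht'def, Equiv.Perm.mul_apply, Equiv.swap_apply_of_ne_of_ne h1 h2]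
  have hlt : invN t' < invN t := invN_mul_swap_lt' t hib htbi
  -- dominance passes to t'
  have hdom' : ∀ m j : ℕ, Pc r m j ≤ Pc t' m j := by
    intro m j
    rcases le_or_gt m (i : ℕ) with hmi | hmi
    · have hset : (univ.filter fun a : Fin n => (a : ℕ) < m ∧ j ≤ ((t' a : Fin n) : ℕ))
          = (univ.filter fun a : Fin n => (a : ℕ) < m ∧ j ≤ ((t a : Fin n) : ℕ)) := by
        ext a
        simp only [mem_filter, mem_univ, true_and]
        have hkey : ∀ (h1 : (a : ℕ) < m), t' a = t a := by
          intro h1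
          refine ht'o a (fun hEq => ?_) (fun hEq => ?_) <;> subst hEq
          · omega
          · have := Fin.lt_def.1 hib
            omega
        constructor <;> rintro ⟨h1, h2⟩ <;> refine ⟨h1, ?_⟩
        · rw [← hkey h1]; exact h2
        · rw [hkey h1]; exact h2
      have hPc : Pc t' m j = Pc t m j := by
        unfold Pc
        rw [hset]
      rw [hPc]; exact h m j
    · rcases le_or_gt m (b : ℕ) with hmb | hmb
      · -- i < m ≤ b
        have hQct' : Qc t' i m j = Qc t i m j := by
          have hset : (univ.filter fun a : Fin n =>
                (i : ℕ) < (a : ℕ) ∧ (a : ℕ) < m ∧ j ≤ ((t' a : Fin n) : ℕ))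
              = (univ.filter fun a : Fin n =>
                (i : ℕ) < (a : ℕ) ∧ (a : ℕ) < m ∧ j ≤ ((t a : Fin n) : ℕ)) := by
            ext a
            simp only [mem_filter, mem_univ, true_and]
            have hkey : ∀ (h1 : (i : ℕ) < (a : ℕ)) (h2 : (a : ℕ) < m), t' a = t a := by
              intro h1 h2
              refine ht'o a (fun hEq => ?_) (fun hEq => ?_) <;> subst hEq
              · omega
              · omega
            constructor <;> rintro ⟨h1, h2, h3⟩ <;> refine ⟨h1, h2, ?_⟩
            · rw [← hkey h1 h2]; exact h3
            · rw [hkey h1 h2]; exact h3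
          unfold Qc
          rw [hset]
        have hEct' : ∀ j' : ℕ, Ec t' i j' = Ec t i j' := by
          intro j'
          have hset : (univ.filter fun a : Fin n => (a : ℕ) < (i : ℕ) ∧ j' ≤ ((t' a : Fin n) : ℕ))
              = (univ.filter fun a : Fin n => (a : ℕ) < (i : ℕ) ∧ j' ≤ ((t a : Fin n) : ℕ)) := by
            ext a
            simp only [mem_filter, mem_univ, true_and]
            have hkey : ∀ (h1 : (a : ℕ) < (i : ℕ)), t' a = t a := by
              intro h1
              refine ht'o a (fun hEq => ?_) (fun hEq => ?_) <;> subst hEq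
              · omega
              · have := Fin.lt_def.1 hib
                omega
            constructor <;> rintro ⟨h1, h2⟩ <;> refine ⟨h1, ?_⟩
            · rw [← hkey h1]; exact h2
            · rw [hkey h1]; exact h2
          unfold Ec
          rw [hset]
        rw [Pc_split t' i hmi, Pc_split r i hmi, hQct', hEct', hEc, ht'i]
        rcases le_or_gt j ((t b : Fin n) : ℕ) with hj1 | hj1
        · -- j ≤ t b : same as comparison with t
          have hdom := h m j
          rw [Pc_split t i hmi, Pc_split r i hmi, hEc] at hdom
          have hj2 : j ≤ ((t i : Fin n) : ℕ) := le_trans hj1 (Fin.lt_def.1 htbi).le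
          rw [if_pos hj2] at hdom
          rw [if_pos hj1]
          exact hdom
        · rcases le_or_gt j ((t i : Fin n) : ℕ) with hj2 | hj2
          · -- the rectangle : t b < j ≤ t i
            have hjri : ((r i : Fin n) : ℕ) < j := by
              have := Fin.le_def.1 hrib
              omega
            rw [if_neg (by omega), if_neg (by omega)]
            -- need : Qc r i m j ≤ Qc t i m j
            have hs1 : Qc r i m j ≤ Qc r i m ((r i : Fin n) : ℕ) := by
              apply card_le_card
              intro a ha
              rw [mem_filter] at ha ⊢
              obtain ⟨h1, h2, h3, h4⟩ := ha
              exact ⟨h1, h2, h3, by omega⟩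
            have hs2 : Qc r i m ((r i : Fin n) : ℕ) ≤ Qc t i m ((r i : Fin n) : ℕ) := by
              have hdom := h m ((r i : Fin n) : ℕ)
              rw [Pc_split t i hmi, Pc_split r i hmi, hEc] at hdom
              rw [if_pos (le_refl _), if_pos (by omega)] at hdom
              omega
            have hs3 : Qc t i m ((r i : Fin n) : ℕ) = Qc t i m j := by
              have hset : (univ.filter fun a : Fin n =>
                    (i : ℕ) < (a : ℕ) ∧ (a : ℕ) < m ∧ ((r i : Fin n) : ℕ) ≤ ((t a : Fin n) : ℕ))
                  = (univ.filter fun a : Fin n =>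
                    (i : ℕ) < (a : ℕ) ∧ (a : ℕ) < m ∧ j ≤ ((t a : Fin n) : ℕ)) := by
                ext a
                simp only [mem_filter, mem_univ, true_and]
                constructor <;> rintro ⟨h1, h2, h3⟩ <;> refine ⟨h1, h2, ?_⟩
                · -- r i ≤ t a → j ≤ t a, using minimality of b
                  have hab : a < b := by
                    rw [Fin.lt_def]; omega
                  have h5 : ¬ (t a < t i) := by
                    intro h6
                    have := hbmin a (Fin.lt_def.2 h1) (Fin.le_def.2 h3) h6
                    exact absurd hab (not_lt.2 this)
                  have := Fin.le_def.1 (not_lt.1 h5)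
                  omega
                · omega
              unfold Qc
              rw [hset]
            omega
          · -- j > t i
            have hdom := h m j
            rw [Pc_split t i hmi, Pc_split r i hmi, hEc] at hdom
            split_ifs at hdom ⊢ <;> omega
      · -- m > b : swap is a bijection of the relevant positions
        have hsw : ∀ a : Fin n, (a : ℕ) < m → ((Equiv.swap i b a : Fin n) : ℕ) < m := by
          intro a ha
          rcases eq_or_ne a i with rfl | hai
          · rw [Equiv.swap_apply_left]
            have := Fin.lt_def.1 hib
            omega
          rcases eq_or_ne a b with rfl | hab
          · rw [Equiv.swap_apply_right]
            have := Fin.lt_def.1 hib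
            omega
          · rw [Equiv.swap_apply_of_ne_of_ne hai hab]
            exact ha
        have ht'apply : ∀ a : Fin n, t' a = t (Equiv.swap i b a) := by
          intro a
          rw [ht'def, Equiv.Perm.mul_apply]
        have hPc : Pc t' m j = Pc t m j := by
          unfold Pc
          apply card_nbij' (Equiv.swap i b) (Equiv.swap i b)
          · intro a ha
            rw [mem_coe, mem_filter] at ha ⊢
            obtain ⟨-, h1, h2⟩ := ha
            rw [ht'apply] at h2
            exact ⟨mem_univ _, hsw a h1, h2⟩
          · intro a ha
            rw [mem_coe, mem_filter] at ha ⊢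
            obtain ⟨-, h1, h2⟩ := ha
            refine ⟨mem_univ _, hsw a h1, ?_⟩
            rw [ht'apply, Equiv.swap_apply_self]
            exact h2
          · intro a _
            exact Equiv.swap_apply_self i b a
          · intro a _
            exact Equiv.swap_apply_self i b a
        rw [hPc]
        exact h m j
  -- apply the induction hypothesis to t'
  obtain ⟨h1, -⟩ := ih (invN t') (by omega) t' rfl hdom'
  have h2 : invN r < invN t := lt_of_le_of_lt h1 hlt
  exact ⟨le_of_lt h2, fun _ => h2⟩


/-- tail count: positions `≥ m` with value `≥ j`. -/
def Tc (w : Equiv.Perm (Fin n)) (m j : ℕ) : ℕ :=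
  (univ.filter fun i : Fin n => m ≤ (i : ℕ) ∧ j ≤ ((w i : Fin n) : ℕ)).card

lemma Tc_symm (w : Equiv.Perm (Fin n)) (m j : ℕ) : Tc w.symm m j = Tc w j m := by
  classical
  unfold Tc
  apply card_nbij' (fun i => w.symm i) (fun a => w a)
  · intro a ha
    rw [mem_coe, mem_filter] at ha ⊢
    obtain ⟨-, h1, h2⟩ := ha
    refine ⟨mem_univ _, h2, ?_⟩
    rw [Equiv.apply_symm_apply]
    exact h1
  · intro a ha
    rw [mem_coe, mem_filter] at ha ⊢
    obtain ⟨-, h1, h2⟩ := ha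
    refine ⟨mem_univ _, h2, ?_⟩
    rw [Equiv.symm_apply_apply]
    exact h1
  · intro a _
    exact w.apply_symm_apply a
  · intro a _
    exact w.symm_apply_apply a

lemma Pc_add_Tc (w : Equiv.Perm (Fin n)) (m j : ℕ) :
    Pc w m j + Tc w m j = (univ.filter fun c : Fin n => j ≤ (c : ℕ)).card := by
  classical
  have h1 : (univ.filter fun a : Fin n => (a : ℕ) < m ∧ j ≤ ((w a : Fin n) : ℕ))
      = ((univ.filter fun a : Fin n => j ≤ ((w a : Fin n) : ℕ)).filter
          fun a : Fin n => (a : ℕ) < m) := by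
    rw [filter_filter]
    ext a
    simp only [mem_filter, mem_univ, true_and]
    tauto
  have h2 : (univ.filter fun a : Fin n => m ≤ (a : ℕ) ∧ j ≤ ((w a : Fin n) : ℕ))
      = ((univ.filter fun a : Fin n => j ≤ ((w a : Fin n) : ℕ)).filter
          fun a : Fin n => ¬ (a : ℕ) < m) := by
    rw [filter_filter]
    ext a
    simp only [mem_filter, mem_univ, true_and, not_lt]
    tauto
  have h3 : (univ.filter fun a : Fin n => j ≤ ((w a : Fin n) : ℕ))
      = (univ.filter fun a : Fin n => j ≤ ((w a : Fin n) : ℕ)) := rfl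
  rw [Pc, Tc, h1, h2, card_filter_add_card_filter_not]
  apply card_nbij' (fun a => w a) (fun c => w.symm c)
  · intro a ha
    rw [mem_coe, mem_filter] at ha ⊢
    exact ⟨mem_univ _, ha.2⟩
  · intro c hc
    rw [mem_coe, mem_filter] at hc ⊢
    refine ⟨mem_univ _, ?_⟩
    rw [Equiv.apply_symm_apply]
    exact hc.2
  · intro a _
    exact w.symm_apply_apply a
  · intro a _
    exact w.apply_symm_apply a

/-- the tail embedding `Fin (n - m) → Fin n`. -/
def emb {n : ℕ} (m : ℕ) (hm : m ≤ n) : Fin (n - m) → Fin n :=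
  fun x => ⟨m + (x : ℕ), by omega⟩

lemma sum_tail {M : Type*} [AddCommMonoid M] {n : ℕ} (m : ℕ) (hm : m ≤ n) (f : Fin n → M)
    (hf : ∀ a : Fin n, (a : ℕ) < m → f a = 0) :
    ∑ a, f a = ∑ x : Fin (n - m), f (emb m hm x) := by
  have h : m + (n - m) = n := by omega
  rw [← Fin.sum_congr' f h, Fin.sum_univ_add]
  have h1 : ∀ x : Fin m, f (Fin.cast h (Fin.castAdd (n - m) x)) = 0 := by
    intro x
    apply hf
    simp
  have h2 : ∀ x : Fin (n - m), f (Fin.cast h (Fin.natAdd m x)) = f (emb m hm x) := by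
    intro x
    congr 1
  rw [Finset.sum_congr rfl (fun x _ => h1 x), Finset.sum_congr rfl (fun x _ => h2 x)]
  simp

lemma submatrix_mul_tail {n m : ℕ} (hm : m ≤ n) {k : Type*} [CommRing k]
    (X Y : Matrix (Fin n) (Fin n) k) (hX : ∀ i j : Fin n, j < i → X i j = 0) :
    (X * Y).submatrix (emb m hm) (emb m hm)
      = X.submatrix (emb m hm) (emb m hm) * Y.submatrix (emb m hm) (emb m hm) := by
  ext x y
  simp only [Matrix.submatrix_apply, Matrix.mul_apply]
  rw [sum_tail m hm _ (fun a ha => by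
    rw [hX (emb m hm x) a (by rw [Fin.lt_def]; show (a : ℕ) < m + (x : ℕ); omega), zero_mul])]

end PSAux

open PS in
/-- Proposition 3.2(f): over a finite field `k`, if `ℓ(t) ≤ ℓ(r)` and `t ≠ r` in the Weyl
group, then `ULV ∩ t⁻¹Ur = ∅`. -/
theorem ULV_inter_tUr_empty (n : ℕ) (k : Type*) [Field k] [Fintype k]
    (t r : Equiv.Perm (Fin n)) (hlen : permLength t ≤ permLength r) (hne : t ≠ r)
    (u l v u' : GL (Fin n) k) (hu : IsU u) (hl : IsL l) (hv : IsV v) (hu' : IsU u') :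
    u * l * v ≠ (permGL t)⁻¹ * u' * permGL r := by
  classical
  intro hEq
  -- pass to matrices
  have hMat : ((u : Matrix (Fin n) (Fin n) k) * (l : Matrix (Fin n) (Fin n) k) *
      (v : Matrix (Fin n) (Fin n) k))
      = (u' : Matrix (Fin n) (Fin n) k).submatrix ⇑(t⁻¹ : Equiv.Perm (Fin n)) ⇑(r.symm) := by
    have h0 := congrArg (fun g : GL (Fin n) k => (g : Matrix (Fin n) (Fin n) k)) hEq
    simp only [Units.val_mul] at h0
    have h1 : (((permGL t)⁻¹ : GL (Fin n) k) : Matrix (Fin n) (Fin n) k)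
        = (t⁻¹ : Equiv.Perm (Fin n)).permMatrix k := rfl
    have h2 : ((permGL r : GL (Fin n) k) : Matrix (Fin n) (Fin n) k) = r.permMatrix k := rfl
    rw [h1, h2] at h0
    rw [h0, mul_assoc, PEquiv.mul_toMatrix_toPEquiv, PEquiv.toMatrix_toPEquiv_mul,
      Matrix.submatrix_submatrix, Function.id_comp, Function.comp_id]
  -- dominance from nonvanishing tail minors
  have key : ∀ (m : ℕ) (hm : m ≤ n), ∃ π : Equiv.Perm (Fin (n - m)),
      ∀ x : Fin (n - m),
        (t⁻¹ : Equiv.Perm (Fin n)) (PSAux.emb m hm (π x)) ≤ r.symm (PSAux.emb m hm x) := by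
    intro m hm
    set E := PSAux.emb m hm with hE
    have hEmono : ∀ x y : Fin (n - m), y < x → E y < E x := by
      intro x y hxy
      rw [Fin.lt_def] at hxy ⊢
      show m + (y : ℕ) < m + (x : ℕ)
      omega
    have hsub1 : (((u : Matrix (Fin n) (Fin n) k) * ((l : Matrix (Fin n) (Fin n) k) *
        (v : Matrix (Fin n) (Fin n) k)))).submatrix E E
        = (u : Matrix (Fin n) (Fin n) k).submatrix E E *
          (((l : Matrix (Fin n) (Fin n) k) * (v : Matrix (Fin n) (Fin n) k))).submatrix E E :=
      PSAux.submatrix_mul_tail hm _ _ hu.2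
    have hsub2 : (((l : Matrix (Fin n) (Fin n) k) * (v : Matrix (Fin n) (Fin n) k))).submatrix E E
        = (l : Matrix (Fin n) (Fin n) k).submatrix E E *
          (v : Matrix (Fin n) (Fin n) k).submatrix E E :=
      PSAux.submatrix_mul_tail hm _ _ (fun i j hij => hl i j (ne_of_gt hij))
    have hdetU : ((u : Matrix (Fin n) (Fin n) k).submatrix E E).det = 1 := by
      have hBT : ((u : Matrix (Fin n) (Fin n) k).submatrix E E).BlockTriangular id := by
        intro x y hxy
        exact hu.2 (E x) (E y) (hEmono x y hxy)
      rw [Matrix.det_of_upperTriangular hBT]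
      exact Finset.prod_eq_one (fun x _ => hu.1 (E x))
    have hdetV : ((v : Matrix (Fin n) (Fin n) k).submatrix E E).det = 1 := by
      have hBT : ((v : Matrix (Fin n) (Fin n) k).submatrix E E).BlockTriangular OrderDual.toDual := by
        intro x y hxy
        exact hv.2 (E x) (E y) (hEmono y x hxy)
      rw [Matrix.det_of_lowerTriangular _ hBT]
      exact Finset.prod_eq_one (fun x _ => hv.1 (E x))
    have hlDiag : ∀ a : Fin n, (l : Matrix (Fin n) (Fin n) k) a a ≠ 0 := by
      have hdet1 : ((l : Matrix (Fin n) (Fin n) k)).det *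
          ((((l⁻¹ : GL (Fin n) k)) : Matrix (Fin n) (Fin n) k)).det = 1 := by
        rw [← Matrix.det_mul, ← Units.val_mul, mul_inv_cancel, Units.val_one, Matrix.det_one]
      have hdet : ((l : Matrix (Fin n) (Fin n) k)).det ≠ 0 :=
        left_ne_zero_of_mul_eq_one hdet1
      have hBT : ((l : Matrix (Fin n) (Fin n) k)).BlockTriangular id := by
        intro i j hij
        exact hl i j (ne_of_gt hij)
      rw [Matrix.det_of_upperTriangular hBT] at hdet
      intro a
      exact Finset.prod_ne_zero_iff.1 hdet a (Finset.mem_univ a)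
    have hdetL : ((l : Matrix (Fin n) (Fin n) k).submatrix E E).det
        = ∏ x : Fin (n - m), ((l : Matrix (Fin n) (Fin n) k).submatrix E E) x x := by
      have hBT : ((l : Matrix (Fin n) (Fin n) k).submatrix E E).BlockTriangular id := by
        intro x y hxy
        exact hl (E x) (E y) (ne_of_gt (hEmono x y hxy))
      rw [Matrix.det_of_upperTriangular hBT]
    have hdetA : ((((u : Matrix (Fin n) (Fin n) k) * (l : Matrix (Fin n) (Fin n) k) *
        (v : Matrix (Fin n) (Fin n) k))).submatrix E E).det ≠ 0 := by
      rw [mul_assoc, hsub1, hsub2, Matrix.det_mul, Matrix.det_mul, hdetU, hdetV, hdetL,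
        one_mul, mul_one]
      exact Finset.prod_ne_zero_iff.2 (fun x _ => hlDiag (E x))
    rw [hMat, Matrix.submatrix_submatrix, Matrix.det_apply] at hdetA
    obtain ⟨π, -, hπ⟩ := Finset.exists_ne_zero_of_sum_ne_zero hdetA
    refine ⟨π, fun x => ?_⟩
    have hprod : (∏ i, ((u' : Matrix (Fin n) (Fin n) k).submatrix
        (⇑(t⁻¹ : Equiv.Perm (Fin n)) ∘ E) (⇑r.symm ∘ E)) (π i) i) ≠ 0 := by
      intro h0
      rw [h0, smul_zero] at hπ
      exact hπ rfl
    have hfac := Finset.prod_ne_zero_iff.1 hprod x (Finset.mem_univ x)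
    simp only [Matrix.submatrix_apply, Function.comp_apply] at hfac
    by_contra hlt
    push_neg at hlt
    exact hfac (hu'.2 _ _ hlt)
  -- tail-count dominance
  have hT : ∀ m j : ℕ, PSAux.Tc (t⁻¹ : Equiv.Perm (Fin n)) m j ≤
      PSAux.Tc (r⁻¹ : Equiv.Perm (Fin n)) m j := by
    intro m j
    rcases le_or_gt m n with hm | hm
    · obtain ⟨π, hπ⟩ := key m hm
      unfold PSAux.Tc
      apply Finset.card_le_card_of_injOn (fun i : Fin n =>
        if h : m ≤ (i : ℕ) then PSAux.emb m hm (π.symm ⟨(i : ℕ) - m, by omega⟩) else i)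
      · intro i hi
        rw [Finset.mem_coe, Finset.mem_filter] at hi ⊢
        obtain ⟨-, h1, h2⟩ := hi
        beta_reduce; rw [dif_pos h1]
        set z : Fin (n - m) := ⟨(i : ℕ) - m, by omega⟩ with hz
        have hEz : PSAux.emb m hm z = i := by
          apply Fin.ext
          show m + ((i : ℕ) - m) = (i : ℕ)
          omega
        have hco := hπ (π.symm z)
        rw [Equiv.apply_symm_apply, hEz] at hco
        refine ⟨Finset.mem_univ _, ?_, ?_⟩
        · show m ≤ m + ((π.symm z : Fin (n - m)) : ℕ)
          omega
        · have hv1 : ((t⁻¹ : Equiv.Perm (Fin n)) i : ℕ) ≤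
              ((r.symm (PSAux.emb m hm (π.symm z)) : Fin n) : ℕ) := Fin.le_def.1 hco
          have hv2 : ((r⁻¹ : Equiv.Perm (Fin n)) (PSAux.emb m hm (π.symm z)) : ℕ)
              = ((r.symm (PSAux.emb m hm (π.symm z)) : Fin n) : ℕ) := rfl
          omega
      · intro i hi i' hi' hEq2
        rw [Finset.mem_coe, Finset.mem_filter] at hi hi'
        dsimp only at hEq2
        rw [dif_pos hi.2.1, dif_pos hi'.2.1] at hEq2
        have h3 : ((PSAux.emb m hm (π.symm ⟨(i : ℕ) - m, by omega⟩) : Fin n) : ℕ)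
            = ((PSAux.emb m hm (π.symm ⟨(i' : ℕ) - m, by omega⟩) : Fin n) : ℕ) := by
          rw [hEq2]
        have h4 : ((π.symm (⟨(i : ℕ) - m, by omega⟩ : Fin (n - m))) : ℕ)
            = ((π.symm (⟨(i' : ℕ) - m, by omega⟩ : Fin (n - m))) : ℕ) := by
          have := h3
          simp only [PSAux.emb] at this
          omega
        have h5 := π.symm.injective (Fin.ext h4)
        have h6 : (i : ℕ) - m = (i' : ℕ) - m := congrArg Fin.val h5
        have := hi.2.1
        have := hi'.2.1
        apply Fin.ext
        omega
    · -- m > n : left side is empty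
      have : (Finset.univ.filter fun i : Fin n =>
          m ≤ (i : ℕ) ∧ j ≤ (((t⁻¹ : Equiv.Perm (Fin n)) i : Fin n) : ℕ)) = ∅ := by
        rw [Finset.filter_eq_empty_iff]
        rintro i - ⟨h1, -⟩
        have := i.2
        omega
      unfold PSAux.Tc
      rw [this]
      simp
  -- prefix-count dominance
  have hPc : ∀ m j : ℕ, PSAux.Pc r m j ≤ PSAux.Pc t m j := by
    intro m j
    have h1 : PSAux.Tc t m j ≤ PSAux.Tc r m j := by
      have ha := hT j m
      have hb : PSAux.Tc (t⁻¹ : Equiv.Perm (Fin n)) j m = PSAux.Tc t m j := PSAux.Tc_symm t j m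
      have hc : PSAux.Tc (r⁻¹ : Equiv.Perm (Fin n)) j m = PSAux.Tc r m j := PSAux.Tc_symm r j m
      omega
    have h2 := PSAux.Pc_add_Tc t m j
    have h3 := PSAux.Pc_add_Tc r m j
    omega
  -- conclude via the chain lemma
  have hchain := PSAux.dom_invN r (PSAux.invN t) t rfl hPc
  have hlt := hchain.2 hne
  rw [PSAux.permLength_eq_invN, PSAux.permLength_eq_invN] at hlen
  omega
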